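/- arXiv:1212.1913 — 2 statements merged into one kernel-verified Lean document; each statement's English description precedes it below -/
import Mathlib

section
/- Let q ≥ 2 and n ≥ 1, let K be the (n+1)×(n+1) matrix whose (j,i) entry is the Krawtchouk polynomial value K_j(i) for parameters n and q, and let 𝐟 = (f(0), …, f(n)) be the vector of values of a completely monotonic function f : {0,1,…,n} → ℝ. Then the vector K^t 𝐟, i.e., the function i ↦ Σ_{k=0}^n K_k(i) f(k), is also completely monotonic on {0,1,…,n}. -/
open Finset Polynomial

set_option maxRecDepth 8000

/-- The Krawtchouk polynomial `K_k(x; n, q)` evaluated at a natural number `x`. -/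
noncomputable def kraw (n q k x : ℕ) : ℝ :=
  ∑ j ∈ Finset.range (k+1),
    (-1 : ℝ)^j * ((q : ℝ) - 1)^(k-j) * (x.choose j : ℝ) * ((n-x).choose (k-j) : ℝ)

/-- The finite difference operator `Δf(m) = f(m+1) − f(m)`. -/
def fdiff (f : ℕ → ℝ) : ℕ → ℝ := fun m => f (m+1) - f m

/-- `f` is completely monotonic on `{a, a+1, …, b}`:
`(−1)^k Δ^k f(i) ≥ 0` whenever `k ≥ 0` and `a ≤ i ≤ b − k`. -/
def CompletelyMonotonicOn (f : ℕ → ℝ) (a b : ℕ) : Prop :=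
  ∀ k i, a ≤ i → i + k ≤ b → 0 ≤ (-1 : ℝ)^k * (fdiff^[k] f) i

/-! ### Auxiliary lemmas on the finite difference operator -/

lemma fdiff_eq_fwdDiff (f : ℕ → ℝ) : fdiff f = fwdDiff 1 f := rfl

lemma fdiff_iter_congr : ∀ (m : ℕ) (f g : ℕ → ℝ) (i : ℕ),
    (∀ x, i ≤ x → x ≤ i + m → f x = g x) → fdiff^[m] f i = fdiff^[m] g i := by
  intro m
  induction m with
  | zero => intro f g i h; simpa using h i le_rfl (by omega)
  | succ m ih =>
    intro f g i h
    rw [Function.iterate_succ_apply, Function.iterate_succ_apply]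
    exact ih (fdiff f) (fdiff g) i (fun x hx1 hx2 => by
      simp only [fdiff]
      rw [h x (by omega) (by omega), h (x+1) (by omega) (by omega)])

lemma fdiff_iter_sum : ∀ (m : ℕ) (t : Finset ℕ) (g : ℕ → ℕ → ℝ) (x : ℕ),
    fdiff^[m] (fun y => ∑ s ∈ t, g s y) x = ∑ s ∈ t, fdiff^[m] (g s) x := by
  intro m
  induction m with
  | zero => intro t g x; simp
  | succ m ih =>
    intro t g x
    rw [Function.iterate_succ_apply]
    have : fdiff (fun y => ∑ s ∈ t, g s y) = fun y => ∑ s ∈ t, fdiff (g s) y := by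
      funext y; simp [fdiff, Finset.sum_sub_distrib]
    rw [this, ih]
    refine Finset.sum_congr rfl fun s _ => ?_
    rw [Function.iterate_succ_apply]

lemma fdiff_iter_const_mul : ∀ (m : ℕ) (a : ℝ) (g : ℕ → ℝ) (x : ℕ),
    fdiff^[m] (fun y => a * g y) x = a * fdiff^[m] g x := by
  intro m
  induction m with
  | zero => intro a g x; simp
  | succ m ih =>
    intro a g x
    rw [Function.iterate_succ_apply]
    have : fdiff (fun y => a * g y) = fun y => a * fdiff g y := by
      funext y; simp [fdiff, mul_sub]
    rw [this, ih, Function.iterate_succ_apply]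

lemma fdiff_iter_rev (f : ℕ → ℝ) (n : ℕ) : ∀ (s j : ℕ), j + s ≤ n →
    fdiff^[s] (fun x => f (n - x)) j = (-1)^s * fdiff^[s] f (n - j - s) := by
  intro s
  induction s with
  | zero => intro j _; simp
  | succ s ih =>
    intro j hj
    rw [Function.iterate_succ_apply', fdiff]
    rw [ih (j+1) (by omega), ih j (by omega)]
    have h1 : n - j - s = (n - j - (s+1)) + 1 := by omega
    have h2 : n - (j+1) - s = n - j - (s+1) := by omega
    rw [h1, h2, Function.iterate_succ_apply', fdiff]
    ring

lemma newton_formula (g : ℕ → ℝ) (j : ℕ) :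
    g j = ∑ s ∈ range (j+1), (j.choose s : ℝ) * (fdiff^[s] g 0) := by
  have h := shift_eq_sum_fwdDiff_iter (1 : ℕ) g j 0
  simp only [zero_add, smul_eq_mul, mul_one, nsmul_eq_mul] at h
  exact h

lemma newton_rev (f : ℕ → ℝ) (n k : ℕ) (hk : k ≤ n) :
    f k = ∑ s ∈ range (n+1), ((n - k).choose s : ℝ) * ((-1)^s * fdiff^[s] f (n - s)) := by
  have h2 := newton_formula (fun x => f (n - x)) (n - k)
  simp only [Nat.sub_sub_self hk] at h2
  rw [h2]
  rw [Finset.sum_subset (Finset.range_subset_range.mpr (by omega : n - k + 1 ≤ n + 1))]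
  · refine Finset.sum_congr rfl fun s hs => ?_
    rw [fdiff_iter_rev f n s 0 (by simp at hs; omega)]
    simp
  · intro x hx hx2
    simp only [Finset.mem_range] at hx hx2
    rw [Nat.choose_eq_zero_of_lt (by omega)]
    simp

lemma fdiff_iter_choose (n r : ℕ) : ∀ (m i : ℕ), i + m ≤ n →
    fdiff^[m] (fun x => ((n - x).choose r : ℝ)) i
      = (-1)^m * (if m ≤ r then ((n - i - m).choose (r - m) : ℝ) else 0) := by
  intro m
  induction m with
  | zero => intro i _; simp
  | succ m ih =>
    intro i hi
    rw [Function.iterate_succ_apply', fdiff, ih (i+1) (by omega), ih i (by omega)]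
    by_cases hmr : m + 1 ≤ r
    · rw [if_pos (by omega), if_pos hmr, if_pos (by omega)]
      have ha : n - i - m = (n - i - (m+1)) + 1 := by omega
      have hb : r - m = (r - (m+1)) + 1 := by omega
      have hc : n - (i+1) - m = n - i - (m+1) := by omega
      rw [ha, hb, hc, Nat.choose_succ_succ]
      push_cast
      ring
    · by_cases hmr2 : m ≤ r
      · have hmr3 : m = r := by omega
        rw [if_pos hmr2, if_pos hmr2, if_neg hmr]
        have h1 : r - m = 0 := by omega
        rw [h1]
        simp

      · rw [if_neg hmr2, if_neg hmr2, if_neg hmr]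
        ring

/-! ### Polynomial computations for the Krawtchouk identity -/

lemma coeff_one_add_C_mul_X_pow (c : ℝ) (m t : ℕ) :
    (((1 : ℝ[X]) + C c * X)^m).coeff t = c^t * (m.choose t : ℝ) := by
  rw [add_comm, add_pow, finset_sum_coeff]
  have key : ∀ j ∈ range (m+1), ((C c * X) ^ j * 1 ^ (m - j) * (m.choose j : ℝ[X])).coeff t
      = if j = t then c ^ j * (m.choose j : ℝ) else 0 := by
    intro j _
    rw [one_pow, mul_one, mul_pow, ← C_pow, ← C_eq_natCast, coeff_mul_C, coeff_C_mul, coeff_X_pow]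
    by_cases h : t = j
    · subst h; simp
    · simp [h, Ne.symm h]
  rw [Finset.sum_congr rfl key, Finset.sum_ite_eq' (range (m+1)) t (fun j => c ^ j * (m.choose j : ℝ))]
  by_cases h : t ∈ range (m+1)
  · rw [if_pos h]
  · rw [if_neg h, Nat.choose_eq_zero_of_lt (by simp at h; omega)]
    simp

lemma kraw_eq_coeff (n q i k : ℕ) :
    kraw n q k i = (((1 - X : ℝ[X])^i * (1 + C ((q:ℝ)-1) * X)^(n-i)).coeff k) := by
  have h1 : ((1 : ℝ[X]) - X) = 1 + C (-1 : ℝ) * X := by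
    rw [C_neg, C_1]; ring
  rw [h1, coeff_mul, Finset.Nat.sum_antidiagonal_eq_sum_range_succ_mk]
  unfold kraw
  refine Finset.sum_congr rfl fun j hj => ?_
  simp only
  rw [coeff_one_add_C_mul_X_pow, coeff_one_add_C_mul_X_pow]
  ring

lemma natDegree_one_add_C_mul_X_pow_le (c : ℝ) (m : ℕ) :
    (((1 : ℝ[X]) + C c * X)^m).natDegree ≤ m := by
  refine (natDegree_pow_le).trans ?_
  have h : ((1 : ℝ[X]) + C c * X).natDegree ≤ 1 :=
    (natDegree_add_le _ _).trans (max_le (by simp) ((natDegree_C_mul_le c X).trans (by simp)))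
  calc m * ((1 : ℝ[X]) + C c * X).natDegree ≤ m * 1 := Nat.mul_le_mul_left m h
    _ = m := by omega

lemma natDegree_reflect_le' {P : ℝ[X]} {n : ℕ} (hP : P.natDegree ≤ n) :
    (P.reflect n).natDegree ≤ n := by
  refine natDegree_le_iff_coeff_eq_zero.mpr fun m hm => ?_
  rw [coeff_reflect, revAt_eq_self_of_lt hm]
  exact coeff_eq_zero_of_natDegree_lt (by omega)

lemma sum_coeff_mul_choose (n s : ℕ) (P : ℝ[X]) (hP : P.natDegree ≤ n) :
    ∑ k ∈ range (n+1), P.coeff k * ((n-k).choose s : ℝ)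
      = (((P.reflect n).comp (X + 1)).coeff s) := by
  rw [Polynomial.comp, eval₂_eq_sum_range' (C : ℝ →+* ℝ[X]) (Nat.lt_succ_of_le (natDegree_reflect_le' hP)) (X+1)]
  rw [finset_sum_coeff]
  rw [← Finset.sum_range_reflect (fun k => P.coeff k * ((n-k).choose s : ℝ)) (n+1)]
  refine Finset.sum_congr rfl fun j hj => ?_
  simp only [Finset.mem_range] at hj
  have hj' : j ≤ n := by omega
  have h1 : n + 1 - 1 - j = n - j := by omega
  rw [h1, coeff_reflect, revAt_le hj', coeff_C_mul]
  have h2 : ((X + 1 : ℝ[X])^j).coeff s = (j.choose s : ℝ) := by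
    have := coeff_X_add_C_pow (1 : ℝ) j s
    simpa using this
  rw [h2]
  have h3 : n - (n - j) = j := by omega
  rw [h3]

lemma reflect_one_add_C_mul_X_pow (c : ℝ) (m : ℕ) :
    reflect m (((1 : ℝ[X]) + C c * X)^m) = (X + C c)^m := by
  induction m with
  | zero => simp
  | succ m ih =>
    have h1 : ((1 : ℝ[X]) + C c * X).natDegree ≤ 1 :=
      (natDegree_add_le _ _).trans (max_le (by simp) ((natDegree_C_mul_le c X).trans (by simp)))
    rw [pow_succ, reflect_mul _ _ (natDegree_one_add_C_mul_X_pow_le c m) h1]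
    rw [ih, pow_succ]
    congr 1
    have : ((1 : ℝ[X]) + C c * X) = C 1 * X ^ 0 + C c * X ^ 1 := by simp
    rw [this, reflect_add, reflect_C_mul_X_pow, reflect_C_mul_X_pow]
    simp [revAt_le]

lemma one_sub_X_eq : ((1 : ℝ[X]) - X) = 1 + C (-1 : ℝ) * X := by rw [C_neg, C_1]; ring

/-- The key identity: `∑_{k=0}^n K_k(i) C(n-k, s) = q^{n-s} C(n-i, n-s)`. -/
lemma lemB (q n i s : ℕ) (hi : i ≤ n) (hs : s ≤ n) :
    ∑ k ∈ range (n+1), kraw n q k i * ((n-k).choose s : ℝ)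
      = (q:ℝ)^(n-s) * ((n-i).choose (n-s) : ℝ) := by
  have h1 : ((1 - X : ℝ[X])^i).natDegree ≤ i := by
    rw [one_sub_X_eq]; exact natDegree_one_add_C_mul_X_pow_le (-1) i
  have h2 := natDegree_one_add_C_mul_X_pow_le ((q:ℝ)-1) (n-i)
  have hdeg : (((1 - X : ℝ[X])^i * (1 + C ((q:ℝ)-1) * X)^(n-i)).natDegree ≤ n) := by
    refine (natDegree_mul_le).trans ?_
    omega
  have step1 : ∑ k ∈ range (n+1), kraw n q k i * ((n-k).choose s : ℝ)
      = ((((1 - X : ℝ[X])^i * (1 + C ((q:ℝ)-1) * X)^(n-i)).reflect n).comp (X + 1)).coeff s := by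
    rw [← sum_coeff_mul_choose n s _ hdeg]
    exact Finset.sum_congr rfl fun k _ => by rw [kraw_eq_coeff]
  rw [step1]
  have hrefl : ((1 - X : ℝ[X])^i * (1 + C ((q:ℝ)-1) * X)^(n-i)).reflect n
      = (X + C (-1:ℝ))^i * (X + C ((q:ℝ)-1))^(n-i) := by
    have hmul := reflect_mul ((1 - X : ℝ[X])^i) ((1 + C ((q:ℝ)-1) * X)^(n-i)) h1 h2
    have hn : i + (n - i) = n := by omega
    rw [hn] at hmul
    rw [hmul]
    rw [one_sub_X_eq, reflect_one_add_C_mul_X_pow, reflect_one_add_C_mul_X_pow]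
  rw [hrefl, mul_comp, pow_comp, pow_comp, add_comp, add_comp, X_comp, C_comp, C_comp]
  have e1 : (X + 1 + C (-1 : ℝ) : ℝ[X]) = X := by rw [C_neg, C_1]; ring
  have e2 : (X + 1 + C ((q:ℝ) - 1) : ℝ[X]) = X + C (q:ℝ) := by
    rw [map_sub, C_1]; ring
  rw [e1, e2, coeff_X_pow_mul']
  by_cases his : i ≤ s
  · rw [if_pos his, coeff_X_add_C_pow]
    have e3 : (n-i) - (s-i) = n - s := by omega
    have e4 : (n-i).choose (s-i) = (n-i).choose (n-s) := by
      rw [show n - s = (n-i) - (s-i) by omega, Nat.choose_symm (by omega : s - i ≤ n - i)]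
    rw [e3, e4]
  · rw [if_neg his, Nat.choose_eq_zero_of_lt (by omega : n - i < n - s)]
    simp

/-- Lemma 3.5: if `f` is completely monotonic on `{0,…,n}`,
then so is `Kᵗ f`, i.e. the function `i ↦ ∑_{k=0}^n K_k(i) f(k)`. -/
theorem krawtchouk_transpose_completelyMonotonic {q n : ℕ} (hq : 2 ≤ q) (hn : 1 ≤ n)
    (f : ℕ → ℝ) (hf : CompletelyMonotonicOn f 0 n) :
    CompletelyMonotonicOn (fun i => ∑ k ∈ Finset.range (n+1), kraw n q k i * f k) 0 n := by
  intro m i _ him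
  have ha0 : ∀ s, s ≤ n → 0 ≤ (q:ℝ)^(n-s) * ((-1)^s * fdiff^[s] f (n - s)) := fun s hs =>
    mul_nonneg (by positivity) (hf s (n-s) (Nat.zero_le _) (by omega))
  have hgG : ∀ x, x ≤ n → (∑ k ∈ Finset.range (n+1), kraw n q k x * f k)
      = ∑ s ∈ range (n+1), ((q:ℝ)^(n-s) * ((-1)^s * fdiff^[s] f (n - s)))
          * ((n - x).choose (n - s) : ℝ) := by
    intro x hx
    calc ∑ k ∈ range (n+1), kraw n q k x * f k
        = ∑ k ∈ range (n+1), ∑ s ∈ range (n+1),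
            kraw n q k x * (((n-k).choose s : ℝ) * ((-1)^s * fdiff^[s] f (n - s))) := by
          refine Finset.sum_congr rfl fun k hk => ?_
          simp only [Finset.mem_range] at hk
          rw [newton_rev f n k (by omega), Finset.mul_sum]
      _ = ∑ s ∈ range (n+1), ∑ k ∈ range (n+1),
            kraw n q k x * (((n-k).choose s : ℝ) * ((-1)^s * fdiff^[s] f (n - s))) :=
          Finset.sum_comm
      _ = ∑ s ∈ range (n+1), (∑ k ∈ range (n+1), kraw n q k x * ((n-k).choose s : ℝ))
            * ((-1)^s * fdiff^[s] f (n - s)) := by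
          refine Finset.sum_congr rfl fun s hs => ?_
          rw [Finset.sum_mul]
          exact Finset.sum_congr rfl fun k hk => by ring
      _ = ∑ s ∈ range (n+1), ((q:ℝ)^(n-s) * ((-1)^s * fdiff^[s] f (n - s)))
            * ((n - x).choose (n - s) : ℝ) := by
          refine Finset.sum_congr rfl fun s hs => ?_
          simp only [Finset.mem_range] at hs
          rw [lemB q n x s hx (by omega)]
          ring
  have key : fdiff^[m] (fun i => ∑ k ∈ Finset.range (n+1), kraw n q k i * f k) i
      = fdiff^[m] (fun x => ∑ s ∈ range (n+1),
          ((q:ℝ)^(n-s) * ((-1)^s * fdiff^[s] f (n - s))) * ((n - x).choose (n - s) : ℝ)) i :=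
    fdiff_iter_congr m _ _ i (fun x hx1 hx2 => hgG x (by omega))
  rw [key]
  rw [fdiff_iter_sum m (range (n+1))
    (fun s y => ((q:ℝ)^(n-s) * ((-1)^s * fdiff^[s] f (n - s))) * ((n - y).choose (n - s) : ℝ)) i]
  rw [Finset.mul_sum]
  refine Finset.sum_nonneg fun s hs => ?_
  simp only [Finset.mem_range] at hs
  rw [fdiff_iter_const_mul m _ (fun y => ((n - y).choose (n - s) : ℝ)) i]
  rw [fdiff_iter_choose n (n - s) m i (by omega)]
  have hsign : ((-1 : ℝ))^m * ((-1 : ℝ))^m = 1 := by rw [← mul_pow]; norm_num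
  have hrw : (-1:ℝ)^m * (((q:ℝ)^(n-s) * ((-1)^s * fdiff^[s] f (n - s)))
        * ((-1)^m * (if m ≤ n - s then ((n - i - m).choose (n - s - m) : ℝ) else 0)))
      = ((q:ℝ)^(n-s) * ((-1)^s * fdiff^[s] f (n - s)))
        * (if m ≤ n - s then ((n - i - m).choose (n - s - m) : ℝ) else 0) := by
    calc (-1:ℝ)^m * (((q:ℝ)^(n-s) * ((-1)^s * fdiff^[s] f (n - s)))
          * ((-1)^m * (if m ≤ n - s then ((n - i - m).choose (n - s - m) : ℝ) else 0)))
        = ((-1:ℝ)^m * (-1:ℝ)^m) * (((q:ℝ)^(n-s) * ((-1)^s * fdiff^[s] f (n - s)))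
          * (if m ≤ n - s then ((n - i - m).choose (n - s - m) : ℝ) else 0)) := by ring
      _ = _ := by rw [hsign, one_mul]
  rw [hrw]
  refine mul_nonneg (ha0 s (by omega)) ?_
  split
  · exact Nat.cast_nonneg _
  · exact le_refl 0
end

section
/- Let q ≥ 2, n ≥ 1, and let a_1, a_2, …, a_s be real numbers each at least (q−1)n/q. Then the function h : {0,1,…,n} → ℝ given by h(x) = (a_1 − x)(a_2 − x)⋯(a_s − x) is positive definite with respect to the Krawtchouk expansion for parameters n and q. -/
open Finset

/-- A quasicode of length `n` and size `N` over an alphabet of size `q`,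
recorded via its entries `A 0, …, A n`. -/
structure IsQuasicode (q n : ℕ) (N : ℝ) (A : ℕ → ℝ) : Prop where
  nonneg : ∀ i, i ≤ n → 0 ≤ A i
  delsarte : ∀ j, j ≤ n → 0 ≤ ∑ i ∈ Finset.range (n+1), A i * kraw n q j i
  size : ∑ i ∈ Finset.range (n+1), A i = N
  zeroth : A 0 = 1

/-- A universally optimal quasicode: a quasicode that minimizes `f`-energy
among all quasicodes of the same length and size, for every completely
monotonic potential function `f`. -/
def IsUOQuasicode (q n : ℕ) (N : ℝ) (A : ℕ → ℝ) : Prop :=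
  IsQuasicode q n N A ∧
    ∀ f : ℕ → ℝ, CompletelyMonotonicOn f 0 n →
      ∀ B : ℕ → ℝ, IsQuasicode q n N B →
        ∑ i ∈ Finset.range (n+1), f i * A i ≤ ∑ i ∈ Finset.range (n+1), f i * B i

/-- The quasicode `A` (of size `N`) is a `t`-design: `A^⊥_j = 0` for `1 ≤ j ≤ t`. -/
def IsDesign (q n t : ℕ) (A : ℕ → ℝ) : Prop :=
  ∀ j, 1 ≤ j → j ≤ t → ∑ i ∈ Finset.range (n+1), A i * kraw n q j i = 0

/-- `h : {0,…,n} → ℝ` is positive definite: its (unique) Krawtchouk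
coefficients are all nonnegative. -/
def PositiveDefinite (q n : ℕ) (h : ℕ → ℝ) : Prop :=
  ∃ c : ℕ → ℝ, (∀ j, j ≤ n → 0 ≤ c j) ∧
    ∀ i, i ≤ n → h i = ∑ j ∈ Finset.range (n+1), c j * kraw n q j i

open scoped Classical in
/-- The support of a quasicode: `{i > 0 : A i ≠ 0}`. -/
noncomputable def supp (n : ℕ) (A : ℕ → ℝ) : Finset ℕ :=
  (Finset.Icc 1 n).filter (fun i => A i ≠ 0)


lemma chooseR (y j : ℕ) :
    ((y:ℝ) - j) * (y.choose j : ℝ) = ((j:ℝ)+1) * (y.choose (j+1) : ℝ) := by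
  rcases le_or_gt j y with h | h
  · have h1 := Nat.choose_succ_right_eq y j
    have h2 : ((y.choose (j+1) * (j+1) : ℕ) : ℝ) = ((y.choose j * (y - j) : ℕ) : ℝ) := by
      rw [h1]
    push_cast [Nat.cast_sub h] at h2
    linarith [h2]
  · rw [Nat.choose_eq_zero_of_lt h, Nat.choose_eq_zero_of_lt (by omega)]
    ring

lemma kraw_zero (n q x : ℕ) : kraw n q 0 x = 1 := by
  simp [kraw]

lemma kraw_one {n q x : ℕ} (hx : x ≤ n) :
    kraw n q 1 x = ((q:ℝ)-1) * n - q * x := by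
  simp only [kraw, Finset.sum_range_succ, Finset.sum_range_zero]
  norm_num [Nat.choose_one_right]
  push_cast [Nat.cast_sub hx]
  ring

lemma kraw_top {n q x : ℕ} (hx : x ≤ n) : kraw n q (n+1) x = 0 := by
  apply Finset.sum_eq_zero
  intro j hj
  rcases le_or_gt j x with h | h
  · have : (n - x).choose (n+1-j) = 0 := Nat.choose_eq_zero_of_lt (by omega)
    simp [this]
  · have : x.choose j = 0 := Nat.choose_eq_zero_of_lt h
    simp [this]

noncomputable def tK (n q x m j : ℕ) : ℝ :=
  (-1:ℝ)^j * ((q:ℝ)-1)^(m-j) * (x.choose j : ℝ) * ((n-x).choose (m-j) : ℝ)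

lemma kraw_eq_t (n q x m : ℕ) : kraw n q m x = ∑ j ∈ Finset.range (m+1), tK n q x m j := rfl

lemma kraw_rec {n q x : ℕ} (hx : x ≤ n) (l : ℕ) :
    kraw n q 1 x * kraw n q (l+1) x
      = ((l:ℝ)+2) * kraw n q (l+2) x + ((q:ℝ)-2) * ((l:ℝ)+1) * kraw n q (l+1) x
        + ((q:ℝ)-1) * ((n:ℝ) - l) * kraw n q l x := by
  have hnx : ((n-x:ℕ):ℝ) = (n:ℝ) - x := Nat.cast_sub hx
  -- termwise claims
  have claimA : ∀ j ≤ l+1, ((q:ℝ)-1) * ((n:ℝ)-(x:ℝ)) * tK n q x (l+1) j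
      = (((l:ℝ)+1)-(j:ℝ)+1) * tK n q x (l+2) j
        + (((l:ℝ)+1)-(j:ℝ)) * ((q:ℝ)-1) * tK n q x (l+1) j := by
    intro j hj
    obtain ⟨d, hd⟩ : ∃ d, l + 1 = j + d := ⟨l + 1 - j, by omega⟩
    have e1 : l + 1 - j = d := by omega
    have e2 : l + 2 - j = d + 1 := by omega
    have hc := chooseR (n-x) d
    rw [hnx] at hc
    have hdc : ((l:ℝ)+1) = (j:ℝ) + d := by exact_mod_cast congrArg (Nat.cast : ℕ → ℝ) hd
    simp only [tK, e1, e2]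
    rw [hdc]
    linear_combination (((q:ℝ)-1)^d * ((q:ℝ)-1) * (-1:ℝ)^j * (x.choose j : ℝ)) * hc
  have claimB : ∀ j : ℕ, (x:ℝ) * tK n q x (l+1) j
      = -(((j:ℝ)+1) * tK n q x (l+2) (j+1)) + (j:ℝ) * tK n q x (l+1) j := by
    intro j
    have e1 : l + 2 - (j+1) = l + 1 - j := by omega
    have hc := chooseR x j
    simp only [tK, e1, pow_succ]
    linear_combination ((-1:ℝ)^j * ((q:ℝ)-1)^(l+1-j) * (((n-x).choose (l+1-j)) : ℝ)) * hc
  have claim1 : ∀ j ≤ l+1, (((q:ℝ)-1)*((n:ℝ)-(x:ℝ)) - (x:ℝ)) * tK n q x (l+1) j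
      = (((l:ℝ)+2)-(j:ℝ)) * tK n q x (l+2) j + ((j:ℝ)+1) * tK n q x (l+2) (j+1)
        + ((((l:ℝ)+1)*((q:ℝ)-1) - (j:ℝ)*(q:ℝ)) * tK n q x (l+1) j) := by
    intro j hj
    linear_combination claimA j hj - claimB j
  -- the weighted sums
  set G : ℝ := ∑ j ∈ Finset.range (l+2), (j:ℝ) * tK n q x (l+1) j with hGdef
  have claimC : ∀ i : ℕ, ((i:ℝ)+1) * tK n q x (l+1) (i+1) = -(((x:ℝ)-(i:ℝ)) * tK n q x l i) := by
    intro i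
    have e1 : l + 1 - (i+1) = l - i := by omega
    have hc := chooseR x i
    simp only [tK, e1, pow_succ]
    linear_combination (((q:ℝ)-1)^(l-i) * (-1:ℝ)^i * (((n-x).choose (l-i)) : ℝ)) * hc
  have hG : G = ∑ i ∈ Finset.range (l+1), (-(((x:ℝ)-(i:ℝ)) * tK n q x l i)) := by
    rw [hGdef, Finset.sum_range_succ']
    push_cast
    simp only [claimC]
    simp
  have claimD : ∀ j ≤ l, (((l:ℝ)+1) - (j:ℝ)) * tK n q x (l+1) j
      = ((q:ℝ)-1) * (((((n:ℝ)-(x:ℝ)) - ((l:ℝ)-(j:ℝ)))) * tK n q x l j) := by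
    intro j hj
    obtain ⟨d, hd⟩ : ∃ d, l = j + d := ⟨l - j, by omega⟩
    have e1 : l - j = d := by omega
    have e2 : l + 1 - j = d + 1 := by omega
    have hc := chooseR (n-x) d
    rw [hnx] at hc
    have hdc : (l:ℝ) = (j:ℝ) + d := by exact_mod_cast congrArg (Nat.cast : ℕ → ℝ) hd
    simp only [tK, e1, e2]
    rw [hdc]
    linear_combination (-(((q:ℝ)-1) * ((q:ℝ)-1)^d * (-1:ℝ)^j * (x.choose j : ℝ))) * hc
  have hD : ∑ j ∈ Finset.range (l+2), (((l:ℝ)+1) - (j:ℝ)) * tK n q x (l+1) j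
      = ((q:ℝ)-1) * ∑ j ∈ Finset.range (l+1), ((((n:ℝ)-(x:ℝ)) - ((l:ℝ)-(j:ℝ))) * tK n q x l j) := by
    rw [Finset.sum_range_succ, Finset.mul_sum]
    have h0 : (((l:ℝ)+1) - ((l+1 : ℕ):ℝ)) * tK n q x (l+1) (l+1) = 0 := by push_cast; ring
    rw [h0, add_zero]
    exact Finset.sum_congr rfl fun j hj => claimD j (by simpa using Nat.lt_succ_iff.mp (Finset.mem_range.mp hj))
  have hE : ((l:ℝ)+1) * kraw n q (l+1) x
      = G + ∑ j ∈ Finset.range (l+2), (((l:ℝ)+1) - (j:ℝ)) * tK n q x (l+1) j := by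
    rw [kraw_eq_t, Finset.mul_sum, hGdef, ← Finset.sum_add_distrib]
    exact Finset.sum_congr rfl fun j _ => by ring
  have hGstar : (q:ℝ) * G
      = ((l:ℝ)+1) * kraw n q (l+1) x - ((q:ℝ)-1)*((n:ℝ)-(l:ℝ)) * kraw n q l x := by
    rw [hE, hD, hG, kraw_eq_t n q x l, Finset.mul_sum, Finset.mul_sum, Finset.mul_sum,
      ← Finset.sum_add_distrib, ← Finset.sum_sub_distrib]
    exact Finset.sum_congr rfl fun j _ => by ring
  -- main assembly
  have step1 : kraw n q 1 x * kraw n q (l+1) x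
      = ∑ j ∈ Finset.range (l+2), ((((q:ℝ)-1)*((n:ℝ)-(x:ℝ)) - (x:ℝ)) * tK n q x (l+1) j) := by
    rw [kraw_one hx, kraw_eq_t n q x (l+1), Finset.mul_sum]
    exact Finset.sum_congr rfl fun j _ => by ring
  have step2 : ∑ j ∈ Finset.range (l+2), ((((q:ℝ)-1)*((n:ℝ)-(x:ℝ)) - (x:ℝ)) * tK n q x (l+1) j)
      = (∑ j ∈ Finset.range (l+2), (((l:ℝ)+2)-(j:ℝ)) * tK n q x (l+2) j)
        + (∑ j ∈ Finset.range (l+2), ((j:ℝ)+1) * tK n q x (l+2) (j+1))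
        + (∑ j ∈ Finset.range (l+2), (((l:ℝ)+1)*((q:ℝ)-1) - (j:ℝ)*(q:ℝ)) * tK n q x (l+1) j) := by
    rw [← Finset.sum_add_distrib, ← Finset.sum_add_distrib]
    exact Finset.sum_congr rfl fun j hj => claim1 j (by have := Finset.mem_range.mp hj; omega)
  have hS1 : ∑ j ∈ Finset.range (l+3), (((l:ℝ)+2)-(j:ℝ)) * tK n q x (l+2) j
      = ∑ j ∈ Finset.range (l+2), (((l:ℝ)+2)-(j:ℝ)) * tK n q x (l+2) j := by
    rw [Finset.sum_range_succ]
    have h0 : (((l:ℝ)+2) - ((l+2:ℕ):ℝ)) * tK n q x (l+2) (l+2) = 0 := by push_cast; ring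
    rw [h0, add_zero]
  have hS2 : ∑ j ∈ Finset.range (l+3), (j:ℝ) * tK n q x (l+2) j
      = ∑ j ∈ Finset.range (l+2), ((j:ℝ)+1) * tK n q x (l+2) (j+1) := by
    rw [Finset.sum_range_succ']
    push_cast
    simp
  have hS12 : ((l:ℝ)+2) * kraw n q (l+2) x
      = (∑ j ∈ Finset.range (l+2), (((l:ℝ)+2)-(j:ℝ)) * tK n q x (l+2) j)
        + (∑ j ∈ Finset.range (l+2), ((j:ℝ)+1) * tK n q x (l+2) (j+1)) := by
    rw [← hS1, ← hS2, kraw_eq_t n q x (l+2), Finset.mul_sum, ← Finset.sum_add_distrib]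
    exact Finset.sum_congr rfl fun j _ => by ring
  have hS3 : ∑ j ∈ Finset.range (l+2), ((((l:ℝ)+1)*((q:ℝ)-1) - (j:ℝ)*(q:ℝ)) * tK n q x (l+1) j)
      = ((l:ℝ)+1)*((q:ℝ)-1) * kraw n q (l+1) x - (q:ℝ) * G := by
    rw [kraw_eq_t n q x (l+1), Finset.mul_sum, hGdef, Finset.mul_sum, ← Finset.sum_sub_distrib]
    exact Finset.sum_congr rfl fun j _ => by ring
  rw [step1, step2, hS3, ← hS12]
  linarith [hGstar]

lemma pd_mul {q n : ℕ} (hq : 2 ≤ q) (hn : 1 ≤ n) {h : ℕ → ℝ}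
    (hh : PositiveDefinite q n h) {a : ℝ} (ha : ((q:ℝ)-1)*(n:ℝ)/(q:ℝ) ≤ a) :
    PositiveDefinite q n (fun x => (a - (x:ℝ)) * h x) := by
  classical
  obtain ⟨c0, hc0, hrep0⟩ := hh
  set c : ℕ → ℝ := fun j => if j ≤ n then c0 j else 0 with hcdef
  have hc : ∀ j, 0 ≤ c j := by
    intro j
    by_cases hj : j ≤ n
    · simpa [hcdef, hj] using hc0 j hj
    · simp [hcdef, hj]
  have hrep : ∀ i, i ≤ n → h i = ∑ j ∈ Finset.range (n+1), c j * kraw n q j i := by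
    intro i hi
    rw [hrep0 i hi]
    refine Finset.sum_congr rfl fun j hj => ?_
    have : j ≤ n := by have := Finset.mem_range.mp hj; omega
    simp [hcdef, this]
  have hq0 : (0:ℝ) < q := by exact_mod_cast (by omega : 0 < q)
  have hq2 : (2:ℝ) ≤ q := by exact_mod_cast hq
  set α := a - ((q:ℝ)-1)*(n:ℝ)/(q:ℝ) with hα
  have hα0 : 0 ≤ α := sub_nonneg.mpr ha
  refine ⟨fun m => α * c m + (1/(q:ℝ)) *
      ((m:ℝ) * c (m-1) + ((q:ℝ)-2)*(m:ℝ)*c m + ((q:ℝ)-1)*((n:ℝ)-(m:ℝ))*c (m+1)), ?_, ?_⟩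
  · intro j hj
    have h2 : (0:ℝ) ≤ (n:ℝ)-(j:ℝ) := by
      have : (j:ℝ) ≤ n := Nat.cast_le.mpr hj
      linarith
    have hjr : (0:ℝ) ≤ (j:ℝ) := Nat.cast_nonneg j
    apply add_nonneg (mul_nonneg hα0 (hc j))
    apply mul_nonneg (by positivity)
    apply add_nonneg (add_nonneg _ _) _
    · exact mul_nonneg hjr (hc _)
    · exact mul_nonneg (mul_nonneg (by linarith) hjr) (hc j)
    · exact mul_nonneg (mul_nonneg (by linarith) h2) (hc _)
  · intro i hi
    obtain ⟨p, rfl⟩ : ∃ p, n = p + 1 := ⟨n-1, by omega⟩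
    have hterm : ∀ j : ℕ, c (j+1) * (kraw (p+1) q 1 i * kraw (p+1) q (j+1) i)
        = ((j:ℝ)+2) * c (j+1) * kraw (p+1) q (j+2) i
          + ((q:ℝ)-2)*((j:ℝ)+1)*c (j+1) * kraw (p+1) q (j+1) i
          + ((q:ℝ)-1)*(((p:ℝ)+1)-(j:ℝ))*c (j+1) * kraw (p+1) q j i := by
      intro j
      rw [kraw_rec hi j]
      push_cast
      ring
    set A : ℝ := ∑ j ∈ Finset.range p, ((j:ℝ)+2) * c (j+1) * kraw (p+1) q (j+2) i with hA
    set B : ℝ := ∑ j ∈ Finset.range (p+1), ((q:ℝ)-2)*((j:ℝ)+1)*c (j+1) * kraw (p+1) q (j+1) i with hB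
    set C : ℝ := ∑ j ∈ Finset.range (p+1), ((q:ℝ)-1)*(((p:ℝ)+1)-(j:ℝ))*c (j+1) * kraw (p+1) q j i with hC
    have key : ∑ j ∈ Finset.range (p+1+1), c j * (kraw (p+1) q 1 i * kraw (p+1) q j i)
        = ∑ m ∈ Finset.range (p+1+1), ((m:ℝ) * c (m-1) + ((q:ℝ)-2)*(m:ℝ)*c m
            + ((q:ℝ)-1)*(((p:ℝ)+1)-(m:ℝ))*c (m+1)) * kraw (p+1) q m i := by
      have keyL : ∑ j ∈ Finset.range (p+1+1), c j * (kraw (p+1) q 1 i * kraw (p+1) q j i)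
          = c 0 * kraw (p+1) q 1 i + (A + B + C) := by
        rw [Finset.sum_range_succ']
        have h00 : c 0 * (kraw (p+1) q 1 i * kraw (p+1) q 0 i) = c 0 * kraw (p+1) q 1 i := by
          rw [kraw_zero]; ring
        rw [h00]
        have hsplit : ∑ j ∈ Finset.range (p+1), c (j+1) * (kraw (p+1) q 1 i * kraw (p+1) q (j+1) i)
            = (∑ j ∈ Finset.range (p+1), ((j:ℝ)+2) * c (j+1) * kraw (p+1) q (j+2) i) + B + C := by
          rw [hB, hC, ← Finset.sum_add_distrib, ← Finset.sum_add_distrib]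
          exact Finset.sum_congr rfl fun j _ => hterm j
        have hAtop : ∑ j ∈ Finset.range (p+1), ((j:ℝ)+2) * c (j+1) * kraw (p+1) q (j+2) i = A := by
          rw [Finset.sum_range_succ, hA]
          have h0 : kraw (p+1) q (p+2) i = 0 := kraw_top hi
          rw [h0]
          ring
        rw [hsplit, hAtop]
        ring
      have keyR : ∑ m ∈ Finset.range (p+1+1), ((m:ℝ) * c (m-1) + ((q:ℝ)-2)*(m:ℝ)*c m
            + ((q:ℝ)-1)*(((p:ℝ)+1)-(m:ℝ))*c (m+1)) * kraw (p+1) q m i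
          = c 0 * kraw (p+1) q 1 i + (A + B + C) := by
        have hsplit : ∀ m : ℕ, ((m:ℝ) * c (m-1) + ((q:ℝ)-2)*(m:ℝ)*c m
            + ((q:ℝ)-1)*(((p:ℝ)+1)-(m:ℝ))*c (m+1)) * kraw (p+1) q m i
            = (m:ℝ) * c (m-1) * kraw (p+1) q m i + ((q:ℝ)-2)*(m:ℝ)*c m * kraw (p+1) q m i
              + ((q:ℝ)-1)*(((p:ℝ)+1)-(m:ℝ))*c (m+1) * kraw (p+1) q m i := fun m => by ring
        rw [Finset.sum_congr rfl fun m _ => hsplit m, Finset.sum_add_distrib,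
          Finset.sum_add_distrib]
        have hR1 : ∑ m ∈ Finset.range (p+1+1), (m:ℝ) * c (m-1) * kraw (p+1) q m i
            = c 0 * kraw (p+1) q 1 i + A := by
          rw [Finset.sum_range_succ', Finset.sum_range_succ']
          have e0 : ((0:ℕ):ℝ) * c (0-1) * kraw (p+1) q 0 i = 0 := by norm_num
          have e1 : ((0+1:ℕ):ℝ) * c (0+1-1) * kraw (p+1) q (0+1) i
              = c 0 * kraw (p+1) q 1 i := by norm_num
          rw [e0, e1, add_zero, hA]
          have : ∀ j : ℕ, ((j+1+1:ℕ):ℝ) * c (j+1+1-1) * kraw (p+1) q (j+1+1) i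
              = ((j:ℝ)+2) * c (j+1) * kraw (p+1) q (j+2) i := by
            intro j
            have e2 : j+1+1-1 = j+1 := by omega
            have e3 : j+1+1 = j+2 := by omega
            rw [e2, e3]
            push_cast
            ring
          rw [Finset.sum_congr rfl fun j _ => this j]
          ring
        have hR2 : ∑ m ∈ Finset.range (p+1+1), ((q:ℝ)-2)*(m:ℝ)*c m * kraw (p+1) q m i = B := by
          rw [Finset.sum_range_succ', hB]
          have e0 : ((q:ℝ)-2)*((0:ℕ):ℝ)*c 0 * kraw (p+1) q 0 i = 0 := by norm_num
          rw [e0, add_zero]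
          refine Finset.sum_congr rfl fun j _ => ?_
          push_cast
          ring
        have hR3 : ∑ m ∈ Finset.range (p+1+1), ((q:ℝ)-1)*(((p:ℝ)+1)-(m:ℝ))*c (m+1) * kraw (p+1) q m i
            = C := by
          rw [Finset.sum_range_succ, hC]
          have h0 : ((q:ℝ)-1)*(((p:ℝ)+1)-((p+1:ℕ):ℝ))*c (p+1+1) * kraw (p+1) q (p+1) i = 0 := by
            push_cast
            ring
          rw [h0, add_zero]
        rw [hR1, hR2, hR3]
        ring
      rw [keyL, keyR]
    -- now conclude
    have swap : ∑ j ∈ Finset.range (p+1+1), c j * (kraw (p+1) q 1 i * kraw (p+1) q j i)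
        = kraw (p+1) q 1 i * ∑ j ∈ Finset.range (p+1+1), c j * kraw (p+1) q j i := by
      rw [Finset.mul_sum]
      exact Finset.sum_congr rfl fun j _ => by ring
    have ha_dec : a - (i:ℝ) = α + (1/(q:ℝ)) * kraw (p+1) q 1 i := by
      rw [kraw_one hi, hα]
      field_simp
      ring
    show (a - (i:ℝ)) * h i = _
    rw [hrep i hi, ha_dec]
    have expand : ∑ m ∈ Finset.range (p+1+1), ((α * c m + (1/(q:ℝ)) *
        ((m:ℝ) * c (m-1) + ((q:ℝ)-2)*(m:ℝ)*c m + ((q:ℝ)-1)*(((p+1:ℕ):ℝ)-(m:ℝ))*c (m+1)))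
          * kraw (p+1) q m i)
        = α * (∑ m ∈ Finset.range (p+1+1), c m * kraw (p+1) q m i)
          + (1/(q:ℝ)) * ∑ m ∈ Finset.range (p+1+1), ((m:ℝ) * c (m-1) + ((q:ℝ)-2)*(m:ℝ)*c m
              + ((q:ℝ)-1)*(((p:ℝ)+1)-(m:ℝ))*c (m+1)) * kraw (p+1) q m i := by
      rw [Finset.mul_sum, Finset.mul_sum, ← Finset.sum_add_distrib]
      refine Finset.sum_congr rfl fun m _ => ?_
      push_cast
      ring
    rw [expand, ← key, swap]
    ring

/-- Corollary 4.4: if `a_1, …, a_s ≥ (q−1)n/q`, then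
`h(x) = (a_1 − x)(a_2 − x)⋯(a_s − x)` is positive definite. -/
theorem prod_big_positiveDefinite {q n s : ℕ} (hq : 2 ≤ q) (hn : 1 ≤ n)
    (a : ℕ → ℝ) (ha : ∀ i, i < s → ((q : ℝ) - 1) * n / q ≤ a i) :
    PositiveDefinite q n (fun x => ∏ i ∈ Finset.range s, (a i - (x : ℝ))) := by
  induction s with
  | zero =>
    refine ⟨fun j => if j = 0 then 1 else 0, fun j _ => by by_cases hj : j = 0 <;> simp [hj], fun i hi => ?_⟩
    simp only [Finset.prod_range_zero]
    rw [Finset.sum_eq_single 0]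
    · simp [kraw_zero]
    · intro b _ hb; simp [hb]
    · intro h0; exact absurd (Finset.mem_range.mpr (by omega)) h0
  | succ s ih =>
    have hpd := pd_mul hq hn (ih (fun i hi => ha i (by omega))) (ha s (by omega))
    obtain ⟨c, hc, hrep⟩ := hpd
    refine ⟨c, hc, fun i hi => ?_⟩
    have := hrep i hi
    simp only at this
    rw [mul_comm] at this
    simp only [Finset.prod_range_succ]
    exact this
end
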